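/- For a downward closed B ⊆ D^{<ℕ}, either Player II has a winning strategy in the B game or Player I has a defensive (hence winning) strategy; in particular, the B game is determined. -/
import Mathlib
set_option linter.unusedSectionVars false


variable {D : Type*} [Preorder D] [IsDirected D (· ≤ ·)] [Nonempty D]

/-- A subset of a directed set is cofinal if every element has an upper bound in it. -/
def Cofinal (S : Set D) : Prop := ∀ u : D, ∃ v ∈ S, u ≤ v

/-- A subset is eventual if its complement is not cofinal. -/
def Eventual (S : Set D) : Prop := ¬ Cofinal Sᶜ

/-- Inevitable subsets of the tree of nonempty finite sequences from `D`. -/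
def Inevitable (B : Set (List D)) : Prop :=
  Eventual {u : D | [u] ∈ B} ∧
    ∀ t ∈ B, t ≠ [] → Eventual {u : D | t ++ [u] ∈ B}

/-- A set of finite sequences is big if it contains an inevitable subset. -/
def Big (B : Set (List D)) : Prop := ∃ B' : Set (List D), B' ⊆ B ∧ Inevitable B'

/-- `B` is downward closed if it contains the nonempty initial segments of its members. -/
def DownwardClosed (B : Set (List D)) : Prop :=
  ∀ s t : List D, s ≠ [] → s <+: t → t ∈ B → s ∈ B

/-- The finite sequence of the first `n` values of `v`. -/
def pfx (v : ℕ → D) (n : ℕ) : List D := List.ofFn fun i : Fin n => v i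

/-- A strategy for Player I is a function from finite sequences of Player II's
previous moves to `D`. The sequence `(v_i)` of Player II's moves is `φ`-admissible up
to `n` if `φ` applied to each proper initial segment of length `j < n` is `≤ v_{j+1}`. -/
def IAdmissible (φ : List D → D) (v : ℕ → D) (n : ℕ) : Prop :=
  ∀ j : ℕ, j < n → φ (pfx v j) ≤ v j

/-- `φ` is a winning strategy for Player I in the `B` game if every infinite
`φ`-admissible sequence of moves of Player II has all of its nonempty initial
segments in `B`. -/
def IWinning (φ : List D → D) (B : Set (List D)) : Prop :=
  ∀ v : ℕ → D, (∀ j : ℕ, φ (pfx v j) ≤ v j) → ∀ n : ℕ, pfx v (n + 1) ∈ B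

/-- The shifted game: positions `s` with `t ++ s ∈ B`. -/
def shiftGame (B : Set (List D)) (t : List D) : Set (List D) := {s | t ++ s ∈ B}

/-- Player II has a winning strategy in the `B` game: a function `ψ` assigning to each
finite record of previous pairs of moves and each Player I move `u` a response
`v ≥ u`, such that every play according to `ψ` has some nonempty initial segment
outside `B`. -/
def IIHasWinning (B : Set (List D)) : Prop :=
  ∃ ψ : List (D × D) → D → D, (∀ l u, u ≤ ψ l u) ∧
    ∀ u v : ℕ → D,
      (∀ n : ℕ, v n = ψ (List.ofFn fun i : Fin n => (u i, v i)) (u n)) →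
      ∃ n : ℕ, pfx v (n + 1) ∉ B

/-- `φ` is a defensive strategy for Player I in the `B` game if at every position
reachable by a `φ`-admissible sequence of Player II moves, Player II has no winning
strategy in the corresponding shifted game. -/
lemma pfx_zero (v : ℕ → D) : pfx v 0 = [] := rfl

lemma pfx_succ (v : ℕ → D) (n : ℕ) : pfx v (n + 1) = pfx v n ++ [v n] := by
  rw [pfx, pfx, List.ofFn_succ', List.concat_eq_append]
  simp only [Function.comp, Fin.coe_castSucc, Fin.val_last]

lemma pfx_ne_nil (v : ℕ → D) (n : ℕ) : pfx v (n + 1) ≠ [] := by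
  simp [pfx_succ]

lemma exists_good (C : Set (List D)) (h : ¬ IIHasWinning C) :
    ∃ u : D, ∀ w, u ≤ w → ¬ IIHasWinning (shiftGame C [w]) := by
  by_contra hc
  push_neg at hc
  apply h
  choose f hf hwin using hc
  choose Ψ hΨ using hwin
  refine ⟨fun l u => match l with | [] => f u | p :: l' => Ψ p.1 l' u, ?_, ?_⟩
  · intro l u
    cases l with
    | nil => exact hf u
    | cons p l' => exact (hΨ p.1).1 l' u
  · intro u v hplay
    have hv0 : v 0 = f (u 0) := by simpa using hplay 0
    have hplay' : ∀ n, v (n + 1) =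
        Ψ (u 0) (List.ofFn fun i : Fin n => (u (i + 1), v (i + 1))) (u (n + 1)) := by
      intro n
      have h1 := hplay (n + 1)
      rw [List.ofFn_succ] at h1
      simpa [Fin.val_succ] using h1
    obtain ⟨m, hm⟩ := (hΨ (u 0)).2 (fun n => u (n + 1)) (fun n => v (n + 1)) hplay'
    refine ⟨m + 1, ?_⟩
    intro hmem
    apply hm
    show [f (u 0)] ++ pfx (fun n => v (n + 1)) (m + 1) ∈ C
    have heq : [f (u 0)] ++ pfx (fun n => v (n + 1)) (m + 1) = pfx v (m + 2) := by
      rw [← hv0]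
      simp [pfx, List.ofFn_succ, Fin.val_succ]
    rw [heq]
    exact hmem

def IDefensive (φ : List D → D) (B : Set (List D)) : Prop :=
  ∀ (v : ℕ → D) (n : ℕ), IAdmissible φ v n → ¬ IIHasWinning (shiftGame B (pfx v n))

/-- For a downward closed `B ⊆ D^{<ℕ}`, either Player II has a winning strategy in
the `B` game, or Player I has a defensive (hence winning) strategy; in particular the
`B` game is determined. -/
theorem game_determined (B : Set (List D)) (hB : DownwardClosed B) :
    IIHasWinning B ∨ ∃ φ : List D → D, IDefensive φ B ∧ IWinning φ B := by
  by_cases hII : IIHasWinning B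
  · exact Or.inl hII
  · right
    classical
    let good : List D → D := fun s =>
      if h : ¬ IIHasWinning (shiftGame B s) then Classical.choose (exists_good _ h)
      else Classical.arbitrary D
    have hgood : ∀ s, ¬ IIHasWinning (shiftGame B s) →
        ∀ w, good s ≤ w → ¬ IIHasWinning (shiftGame B (s ++ [w])) := by
      intro s hs w hw
      have hg : good s = Classical.choose (exists_good (shiftGame B s) hs) := dif_pos hs
      have hspec := Classical.choose_spec (exists_good (shiftGame B s) hs) w (hg ▸ hw)
      have heq : shiftGame (shiftGame B s) [w] = shiftGame B (s ++ [w]) := by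
        ext r; simp [shiftGame, List.append_assoc]
      rwa [heq] at hspec
    have hdef : IDefensive good B := by
      intro v n h
      induction n with
      | zero => simpa [pfx_zero, shiftGame] using hII
      | succ n ih =>
        have hadm : IAdmissible good v n := fun j hj => h j (Nat.lt_succ_of_lt hj)
        have hn := ih hadm
        have hle : good (pfx v n) ≤ v n := h n (Nat.lt_succ_self n)
        rw [pfx_succ]
        exact hgood _ hn _ hle
    have hwin : IWinning good B := by
      intro v hadm n
      by_contra hnB
      apply hdef v (n + 1) (fun j _ => hadm j)
      refine ⟨fun _ u => u, fun l u => le_refl u, ?_⟩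
      intro u w _
      refine ⟨0, ?_⟩
      intro hmem
      exact hnB (hB (pfx v (n + 1)) _ (pfx_ne_nil v n) ⟨pfx w 1, rfl⟩ hmem)
    exact ⟨good, hdef, hwin⟩
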